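/- Let A = ℝ[a₂, a₃, a₄, …] be the polynomial ℝ-algebra in variables a_n, n ≥ 2, and let D_X and D_Y be the ℝ-linear derivations of A determined on generators by D_X(a_n) = (n+1)a_{n+1} − 2a₂a_n and D_Y(a_n) = (n−1)a_n for all n ≥ 2. Then the commutator satisfies D_Y ∘ D_X − D_X ∘ D_Y = D_X. -/
import Mathlib

/-- The polynomial `ℝ`-algebra on variables `a_n`, `n ≥ 2`. -/
abbrev FdB : Type := MvPolynomial {m : ℕ // 2 ≤ m} ℝ

/-- If `D_X`, `D_Y` are the derivations of `ℝ[a₂, a₃, …]` determined on the generators by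
`D_X(a_n) = (n+1) a_{n+1} - 2 a₂ a_n` and `D_Y(a_n) = (n-1) a_n`, then
`D_Y ∘ D_X - D_X ∘ D_Y = D_X`. -/
theorem stmt10 (DX DY : Derivation ℝ FdB FdB)
    (hX : ∀ (n : ℕ) (hn : 2 ≤ n),
      DX (MvPolynomial.X ⟨n, hn⟩) =
        ((n : FdB) + 1) * MvPolynomial.X ⟨n + 1, by omega⟩ -
          2 * MvPolynomial.X ⟨2, le_refl 2⟩ * MvPolynomial.X ⟨n, hn⟩)
    (hY : ∀ (n : ℕ) (hn : 2 ≤ n),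
      DY (MvPolynomial.X ⟨n, hn⟩) = ((n : FdB) - 1) * MvPolynomial.X ⟨n, hn⟩) :
    ∀ p : FdB, DY (DX p) - DX (DY p) = DX p := by
  have key : ⁅DY, DX⁆ = DX := by
    apply MvPolynomial.derivation_ext
    rintro ⟨n, hn⟩
    rw [Derivation.commutator_apply, hX n hn, hY n hn]
    have hC : ∀ (D : Derivation ℝ FdB FdB) (m : ℕ), D ((m : FdB)) = 0 := by
      intro D m
      simpa using D.map_natCast m
    have hC1 : ∀ (D : Derivation ℝ FdB FdB) (m : ℕ), D ((m : FdB) + 1) = 0 := by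
      intro D m; rw [map_add, hC, Derivation.map_one_eq_zero, add_zero]
    have hC2 : ∀ (D : Derivation ℝ FdB FdB) (m : ℕ), D ((m : FdB) - 1) = 0 := by
      intro D m; rw [map_sub, hC, Derivation.map_one_eq_zero, sub_zero]
    have h2 : ∀ (D : Derivation ℝ FdB FdB), D ((2 : FdB)) = 0 := by
      intro D
      have : ((2 : ℕ) : FdB) = (2 : FdB) := by norm_cast
      rw [← this, hC]
    simp only [map_sub, Derivation.leibniz, hC1, hC2, h2, hX, hY, smul_eq_mul, mul_zero,
      smul_zero, zero_add, add_zero, zero_mul]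
    push_cast
    ring
  intro p
  have := congrArg (fun D : Derivation ℝ FdB FdB => D p) key
  simpa [Derivation.commutator_apply] using this
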